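/- Let 1 ≤ ℓ < k ≤ K and let P[ℓ,k] be a path from level k to level ℓ. For each j ∈ P(ℓ,k] define c_{j,ℓ} = Σ_{i∈P(ℓ,j]} r_max(X_i, S_{A_i}), where A_i = { i' : ℓ ≤ i' < i and i' ∉ P(ℓ,i) }, r(x, S_{A_i}) = Σ_{i'∈A_i} r(x,S_{i'}), and r_max(X_i, S_{A_i}) = max_{x∈S_i} r(x, S_{A_i}); set c_{j,ℓ} = 1 for j ∈ (ℓ,k] not belonging to P(ℓ,k]. Then c_{j,ℓ} ≥ h_max(X_j,S_ℓ) for every ℓ < j ≤ k. -/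
import Mathlib


open Finset

/-- A finite state space partitioned into fitness levels `S_0, …, S_K`
(`lev x = k` means `x ∈ S_k`), together with an elitist row-stochastic
transition matrix `p`. -/
structure LevelChain (S : Type*) [Fintype S] where
  /-- the number of non-optimal levels -/
  K : ℕ
  /-- the level of each state -/
  lev : S → ℕ
  one_le_K : 1 ≤ K
  lev_le : ∀ x, lev x ≤ K
  level_nonempty : ∀ k ≤ K, ∃ x, lev x = k
  /-- transition probabilities -/
  p : S → S → ℝ
  p_nonneg : ∀ x y, 0 ≤ p x y
  p_row_sum : ∀ x, ∑ y, p x y = 1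
  elitist : ∀ x y, lev x < lev y → p x y = 0

variable {S : Type*} [Fintype S]

/-- The fitness level `S_k`. -/
def LevelChain.level (c : LevelChain S) (k : ℕ) : Finset S :=
  Finset.univ.filter fun x => c.lev x = k

/-- The union of levels `S_{[i,j]} = S_i ∪ ⋯ ∪ S_j`. -/
def LevelChain.levels (c : LevelChain S) (i j : ℕ) : Finset S :=
  Finset.univ.filter fun x => i ≤ c.lev x ∧ c.lev x ≤ j

/-- `p(x, A) = Σ_{y ∈ A} p(x, y)`. -/
def LevelChain.pSet (c : LevelChain S) (x : S) (A : Finset S) : ℝ :=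
  ∑ y ∈ A, c.p x y

/-- The standing reachability assumption: from every non-optimal state one can
move to a better level with positive probability. -/
def LevelChain.Reachable (c : LevelChain S) : Prop :=
  ∀ k, 1 ≤ k → k ≤ c.K → ∀ x, c.lev x = k → 0 < c.pSet x (c.levels 0 (k - 1))

/-- Conditional transition probability `r(x, S_j)`:
`r(x,S_j) = p(x,S_j)/(1 − p(x,S_k))` for `j ≠ k = lev x`, and `r(x,S_k) = 0`. -/
noncomputable def LevelChain.r (c : LevelChain S) (x : S) (j : ℕ) : ℝ :=
  if j = c.lev x then 0
  else c.pSet x (c.level j) / (1 - c.pSet x (c.level (c.lev x)))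

/-- `r_min(X_k, S_j) = min_{x ∈ S_k} r(x, S_j)`. -/
noncomputable def LevelChain.rmin (c : LevelChain S) (k j : ℕ) : ℝ :=
  sInf ((fun x => c.r x j) '' {x | c.lev x = k})

/-- `r_max(X_k, S_j) = max_{x ∈ S_k} r(x, S_j)`. -/
noncomputable def LevelChain.rmax (c : LevelChain S) (k j : ℕ) : ℝ :=
  sSup ((fun x => c.r x j) '' {x | c.lev x = k})

/-- `m` is the mean hitting time of the optimal level `S_0`. -/
def LevelChain.IsMeanHittingTime (c : LevelChain S) (m : S → ℝ) : Prop :=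
  (∀ x, 0 ≤ m x) ∧
  (∀ x, c.lev x = 0 → m x = 0) ∧
  (∀ x, c.lev x ≠ 0 → m x = 1 + ∑ y, c.p x y * m y)

/-- `mbar` is the mean level-leaving time on `S ∖ S_0`. -/
def LevelChain.IsLevelLeavingTime (c : LevelChain S) (mbar : S → ℝ) : Prop :=
  (∀ x, c.lev x ≠ 0 → 0 ≤ mbar x) ∧
  (∀ x, c.lev x ≠ 0 → mbar x = 1 + ∑ y ∈ c.level (c.lev x), c.p x y * mbar y)

/-- `h ℓ x` is the probability of hitting level `S_ℓ` starting from `x`. -/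
def LevelChain.IsHitProb (c : LevelChain S) (h : ℕ → S → ℝ) : Prop :=
  (∀ ℓ x, 0 ≤ h ℓ x ∧ h ℓ x ≤ 1) ∧
  (∀ ℓ x, c.lev x = ℓ → h ℓ x = 1) ∧
  (∀ ℓ x, c.lev x < ℓ → h ℓ x = 0) ∧
  (∀ ℓ x, ℓ < c.lev x →
    h ℓ x = ∑ y ∈ c.levels ℓ (c.lev x), c.p x y * h ℓ y)

section Aux

lemma aux_pSet_nonneg (c : LevelChain S) (x : S) (A : Finset S) : 0 ≤ c.pSet x A :=
  Finset.sum_nonneg fun y _ => c.p_nonneg x y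

lemma aux_sum_levels (c : LevelChain S) (a b : ℕ) (f : S → ℝ) :
    ∑ y ∈ c.levels a b, f y = ∑ i ∈ Finset.Icc a b, ∑ y ∈ c.level i, f y := by
  have hmap : ∀ y ∈ c.levels a b, c.lev y ∈ Finset.Icc a b := by
    intro y hy
    simp only [LevelChain.levels, Finset.mem_filter, Finset.mem_univ, true_and] at hy
    rw [Finset.mem_Icc]; exact hy
  rw [← Finset.sum_fiberwise_of_maps_to hmap f]
  refine Finset.sum_congr rfl fun i hi => Finset.sum_congr ?_ fun _ _ => rfl
  rw [Finset.mem_Icc] at hi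
  ext y
  simp only [LevelChain.levels, LevelChain.level, Finset.mem_filter, Finset.mem_univ, true_and]
  omega

lemma aux_pSet_split (c : LevelChain S) (x : S) (a b : ℕ) :
    c.pSet x (c.levels a b) = ∑ i ∈ Finset.Icc a b, c.pSet x (c.level i) := by
  unfold LevelChain.pSet
  exact aux_sum_levels c a b _

lemma aux_pSet_levels_lev (c : LevelChain S) (x : S) :
    c.pSet x (c.levels 0 (c.lev x)) = 1 := by
  rw [← c.p_row_sum x]
  unfold LevelChain.pSet
  refine Finset.sum_subset (Finset.subset_univ _) fun y _ hy => c.elitist x y ?_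
  simp only [LevelChain.levels, Finset.mem_filter, Finset.mem_univ, true_and] at hy
  omega

lemma aux_pSet_below (c : LevelChain S) (x : S) (h1 : 1 ≤ c.lev x) :
    c.pSet x (c.levels 0 (c.lev x - 1)) = 1 - c.pSet x (c.level (c.lev x)) := by
  have h2 := aux_pSet_levels_lev c x
  have h3 : c.pSet x (c.levels 0 (c.lev x)) =
      c.pSet x (c.levels 0 (c.lev x - 1)) + c.pSet x (c.level (c.lev x)) := by
    rw [aux_pSet_split, aux_pSet_split,
      show Finset.Icc 0 (c.lev x) = Finset.Ico 0 (c.lev x + 1) from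
        Finset.ext fun i => by rw [Finset.mem_Icc, Finset.mem_Ico]; omega,
      Finset.sum_Ico_succ_top (Nat.zero_le _),
      show Finset.Ico 0 (c.lev x) = Finset.Icc 0 (c.lev x - 1) from
        Finset.ext fun i => by rw [Finset.mem_Icc, Finset.mem_Ico]; omega]
  linarith

lemma aux_denom_pos (c : LevelChain S) (hreach : c.Reachable) (x : S) (h1 : 1 ≤ c.lev x) :
    0 < 1 - c.pSet x (c.level (c.lev x)) := by
  rw [← aux_pSet_below c x h1]
  exact hreach (c.lev x) h1 (c.lev_le x) x rfl

lemma aux_r_nonneg (c : LevelChain S) (hreach : c.Reachable) (x : S) (h1 : 1 ≤ c.lev x)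
    (i : ℕ) : 0 ≤ c.r x i := by
  unfold LevelChain.r
  split
  · exact le_refl 0
  · exact div_nonneg (aux_pSet_nonneg c x _) (aux_denom_pos c hreach x h1).le

lemma aux_sSup_nonneg (c : LevelChain S) (hreach : c.Reachable) (i : ℕ) (h1 : 1 ≤ i)
    (h2 : i ≤ c.K) (T : Finset ℕ) :
    0 ≤ sSup ((fun x => ∑ i' ∈ T, c.r x i') '' {x | c.lev x = i}) := by
  obtain ⟨x0, hx0⟩ := c.level_nonempty i h2
  calc (0:ℝ) ≤ ∑ i' ∈ T, c.r x0 i' :=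
        Finset.sum_nonneg fun i' _ => aux_r_nonneg c hreach x0 (by omega) i'
    _ ≤ _ := le_csSup (Set.Finite.bddAbove (Set.toFinite _))
        (Set.mem_image_of_mem (fun x => ∑ i' ∈ T, c.r x i') hx0)

end Aux

/-- Explicit upper-bound coefficients along a path `P[ℓ,k]`:
for `j ∈ P(ℓ,k]` let `c_{j,ℓ} = Σ_{i∈P(ℓ,j]} r_max(X_i, S_{A_i})`, where
`A_i = {i' : ℓ ≤ i' < i, i' ∉ P(ℓ,i)}` and `r(x, S_{A_i}) = Σ_{i'∈A_i} r(x,S_{i'})`,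
and set `c_{j,ℓ} = 1` for `j ∈ (ℓ,k]` off the path. Then
`c_{j,ℓ} ≥ h_max(X_j,S_ℓ)` for every `ℓ < j ≤ k`. -/
theorem path_explicit_upper_coefficients_ge_hitProb
    (c : LevelChain S) (hreach : c.Reachable)
    (h : ℕ → S → ℝ) (hh : c.IsHitProb h)
    (ℓ k : ℕ) (hℓ : 1 ≤ ℓ) (hℓk : ℓ < k) (hk : k ≤ c.K)
    (P : Finset ℕ) (hPsub : P ⊆ Finset.Icc ℓ k) (hℓP : ℓ ∈ P) (hkP : k ∈ P)
    (cf : ℕ → ℝ)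
    (hcfP : ∀ j ∈ P, j ≠ ℓ →
      cf j = ∑ i ∈ P ∩ Finset.Ioc ℓ j,
        sSup ((fun x => ∑ i' ∈ Finset.Ico ℓ i \ (P ∩ Finset.Ioo ℓ i), c.r x i') ''
          {x | c.lev x = i}))
    (hoff : ∀ j, ℓ < j → j ≤ k → j ∉ P → cf j = 1) :
    ∀ j, ℓ < j → j ≤ k → ∀ x, c.lev x = j → cf j ≥ h ℓ x := by
  intro j
  induction j using Nat.strong_induction_on with
  | _ j ih =>
  intro hℓj hjk x hx
  obtain ⟨hh1, hh2, hh3, hh4⟩ := hh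
  by_cases hjP : j ∈ P
  swap
  · rw [hoff j hℓj hjk hjP]; exact (hh1 ℓ x).2
  set Q : Finset ℕ := P ∩ Finset.Ioo ℓ j with hQ
  set R : ℕ → ℝ := fun i => sSup ((fun x => ∑ i' ∈ Finset.Ico ℓ i \ (P ∩ Finset.Ioo ℓ i),
      c.r x i') '' {x | c.lev x = i}) with hR
  have hjK : j ≤ c.K := hjk.trans hk
  obtain ⟨x0, hx0⟩ := c.level_nonempty j hjK
  have hlevne : (c.level j).Nonempty := ⟨x0, by simp [LevelChain.level, hx0]⟩
  obtain ⟨z, hzmem, hzmax⟩ := Finset.exists_max_image (c.level j) (h ℓ) hlevne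
  have hzlev : c.lev z = j := by
    simpa [LevelChain.level] using hzmem
  have hz1 : 1 ≤ c.lev z := by omega
  set M : ℝ := h ℓ z with hM
  have hxM : h ℓ x ≤ M := hzmax x (by simp [LevelChain.level, hx])
  have hRnn : ∀ i ∈ Q, 0 ≤ R i := by
    intro i hi
    rw [hQ, Finset.mem_inter, Finset.mem_Ioo] at hi
    exact aux_sSup_nonneg c hreach i (by omega) (by omega) _
  have hC0 : 0 ≤ ∑ i ∈ Q, R i := Finset.sum_nonneg hRnn
  have hcfQ : ∀ i ∈ Q, cf i ≤ ∑ i' ∈ Q, R i' := by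
    intro i hi
    have hi' := hi
    rw [hQ, Finset.mem_inter, Finset.mem_Ioo] at hi'
    rw [hcfP i hi'.1 (by omega)]
    refine Finset.sum_le_sum_of_subset_of_nonneg ?_ fun i'' hi'' _ => hRnn i'' hi''
    intro i'' hi''
    rw [Finset.mem_inter, Finset.mem_Ioc] at hi''
    rw [hQ, Finset.mem_inter, Finset.mem_Ioo]
    exact ⟨hi''.1, hi''.2.1, by omega⟩
  set bnd : ℕ → ℝ := fun i => if i ∈ Q then cf i else 1 with hbnd
  have hbnd_le : ∀ i ∈ Finset.Ico ℓ j, ∀ y, c.lev y = i → h ℓ y ≤ bnd i := by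
    intro i hi y hy
    rw [Finset.mem_Ico] at hi
    rw [hbnd]
    by_cases hiQ : i ∈ Q
    · have hi2 := hiQ
      rw [hQ, Finset.mem_inter, Finset.mem_Ioo] at hi2
      simp only [hiQ, if_true]
      exact ih i (by omega) hi2.2.1 (by omega) y hy
    · simp only [hiQ, if_false]
      exact (hh1 ℓ y).2
  have hrec : M = (∑ i ∈ Finset.Ico ℓ j, ∑ y ∈ c.level i, c.p z y * h ℓ y)
      + ∑ y ∈ c.level j, c.p z y * h ℓ y := by
    rw [hM, hh4 ℓ z (by omega), hzlev, aux_sum_levels,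
      show Finset.Icc ℓ j = Finset.Ico ℓ (j + 1) from
        Finset.ext fun i => by rw [Finset.mem_Icc, Finset.mem_Ico]; omega,
      Finset.sum_Ico_succ_top (by omega)]
  have hlevelsum : ∑ y ∈ c.level j, c.p z y * h ℓ y ≤ c.pSet z (c.level j) * M := by
    unfold LevelChain.pSet
    rw [Finset.sum_mul]
    exact Finset.sum_le_sum fun y hy =>
      mul_le_mul_of_nonneg_left (hzmax y hy) (c.p_nonneg z y)
  have hlowsum : ∀ i ∈ Finset.Ico ℓ j,
      ∑ y ∈ c.level i, c.p z y * h ℓ y ≤ c.pSet z (c.level i) * bnd i := by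
    intro i hi
    unfold LevelChain.pSet
    rw [Finset.sum_mul]
    refine Finset.sum_le_sum fun y hy => ?_
    have hy' : c.lev y = i := by simpa [LevelChain.level] using hy
    exact mul_le_mul_of_nonneg_left (hbnd_le i hi y hy') (c.p_nonneg z y)
  set D : ℝ := 1 - c.pSet z (c.level j) with hD
  have hDpos : 0 < D := by
    have h5 := aux_denom_pos c hreach z hz1
    rwa [hzlev, ← hD] at h5
  set B : ℝ := ∑ i ∈ Finset.Ico ℓ j, c.pSet z (c.level i) * bnd i with hB
  have hMB : M * D ≤ B := by
    have h1 : M ≤ c.pSet z (c.level j) * M + B := by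
      rw [hB]
      calc M = _ := hrec
        _ ≤ _ := add_le_add (Finset.sum_le_sum hlowsum) hlevelsum
        _ = _ := add_comm _ _
    have h2 : M * D = M - c.pSet z (c.level j) * M := by rw [hD]; ring
    linarith
  have hreq : ∀ i ∈ Finset.Ico ℓ j, c.r z i = c.pSet z (c.level i) / D := by
    intro i hi
    rw [Finset.mem_Ico] at hi
    rw [LevelChain.r, if_neg (by omega : ¬ i = c.lev z), hzlev, ← hD]
  have hMle : M ≤ ∑ i ∈ Finset.Ico ℓ j, c.r z i * bnd i := by
    have hBr : ∑ i ∈ Finset.Ico ℓ j, c.r z i * bnd i = B / D := by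
      rw [hB, Finset.sum_div]
      refine Finset.sum_congr rfl fun i hi => ?_
      rw [hreq i hi]
      ring
    rw [hBr]
    exact (le_div_iff₀ hDpos).mpr hMB
  have hQsub : Q ⊆ Finset.Ico ℓ j := by
    intro i hi
    rw [hQ, Finset.mem_inter, Finset.mem_Ioo] at hi
    rw [Finset.mem_Ico]; omega
  rw [← Finset.sum_sdiff hQsub] at hMle
  have hpart1 : ∑ i ∈ Finset.Ico ℓ j \ Q, c.r z i * bnd i ≤ R j := by
    have he : ∑ i ∈ Finset.Ico ℓ j \ Q, c.r z i * bnd i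
        = ∑ i ∈ Finset.Ico ℓ j \ Q, c.r z i := by
      refine Finset.sum_congr rfl fun i hi => ?_
      rw [Finset.mem_sdiff] at hi
      rw [hbnd]
      simp [hi.2]
    rw [he]
    simp only [hR, hQ]
    exact le_csSup (Set.Finite.bddAbove (Set.toFinite _)) ⟨z, hzlev, rfl⟩
  have hrsum : ∑ i ∈ Q, c.r z i ≤ 1 := by
    rw [Finset.sum_congr rfl fun i hi => hreq i (hQsub hi), ← Finset.sum_div,
      div_le_one hDpos]
    have hsub2 : Q ⊆ Finset.Icc 0 (j - 1) := by
      intro i hi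
      have h6 := hQsub hi
      rw [Finset.mem_Ico] at h6
      rw [Finset.mem_Icc]; omega
    have h7 : ∑ i ∈ Q, c.pSet z (c.level i)
        ≤ ∑ i ∈ Finset.Icc 0 (j - 1), c.pSet z (c.level i) :=
      Finset.sum_le_sum_of_subset_of_nonneg hsub2 fun i _ _ => aux_pSet_nonneg c z _
    have h8 : ∑ i ∈ Finset.Icc 0 (j - 1), c.pSet z (c.level i) = D := by
      have h9 := aux_pSet_below c z hz1
      rw [hzlev, ← hD] at h9
      rw [← aux_pSet_split, h9]
    linarith
  have hpart2 : ∑ i ∈ Q, c.r z i * bnd i ≤ ∑ i ∈ Q, R i := by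
    have he : ∑ i ∈ Q, c.r z i * bnd i = ∑ i ∈ Q, c.r z i * cf i := by
      refine Finset.sum_congr rfl fun i hi => ?_
      rw [hbnd]; simp [hi]
    rw [he]
    calc ∑ i ∈ Q, c.r z i * cf i ≤ ∑ i ∈ Q, c.r z i * (∑ i' ∈ Q, R i') :=
          Finset.sum_le_sum fun i hi =>
            mul_le_mul_of_nonneg_left (hcfQ i hi) (aux_r_nonneg c hreach z hz1 i)
      _ = (∑ i ∈ Q, c.r z i) * (∑ i' ∈ Q, R i') := (Finset.sum_mul _ _ _).symm
      _ ≤ 1 * (∑ i' ∈ Q, R i') := mul_le_mul_of_nonneg_right hrsum hC0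
      _ = ∑ i' ∈ Q, R i' := one_mul _
  have hcfj : cf j = R j + ∑ i ∈ Q, R i := by
    rw [hcfP j hjP (by omega)]
    have hins : P ∩ Finset.Ioc ℓ j = insert j Q := by
      ext i
      simp only [hQ, Finset.mem_inter, Finset.mem_Ioc, Finset.mem_Ioo, Finset.mem_insert]
      constructor
      · rintro ⟨hiP, h1, h2⟩
        rcases eq_or_lt_of_le h2 with hh | hh
        · exact Or.inl hh
        · exact Or.inr ⟨hiP, h1, hh⟩
      · rintro (rfl | ⟨hiP, h1, h2⟩)
        · exact ⟨hjP, hℓj, le_refl _⟩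
        · exact ⟨hiP, h1, h2.le⟩
    rw [hins, Finset.sum_insert (by simp [hQ])]
  rw [ge_iff_le, hcfj]
  linarith
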